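/- arXiv:1609.01543 — 2 statements merged into one kernel-verified Lean document; each statement's English description precedes it below -/
import Mathlib

section
/- For every integer m ≥ 1, the map T defined by Tx = H^(m)x is a linear bijection from the Hilbert difference sequence space h_∞(Δ^(m)) onto the space ℓ∞ of bounded real sequences, and it is norm-preserving when h_∞(Δ^(m)) carries the norm ‖x‖ = sup_n |(H^(m)x)_n| and ℓ∞ carries the sup norm. In particular h_∞(Δ^(m)) is linearly isometrically isomorphic to ℓ∞. -/
open Filter Finset Topology

/- Real sequences are modelled as functions `ℕ → ℝ`, where the Lean index `n : ℕ`
corresponds to the paper's index `n + 1` (the paper indexes sequences by `k ≥ 1`).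
Thus the paper's entry `h_{nk} = ∑_{i=k}^{n} (-1)^{i-k} C(m, i-k) / (n+i-1)`
(for `1 ≤ k ≤ n`) becomes, with 0-based indices,
`hMat m n k = ∑_{i ∈ Icc k n} (-1)^{i-k} C(m, i-k) / (n+i+1)`. -/

/-- The entries of the triangle matrix `H^(m) = H Δ^(m)` (0-based indexing). -/
noncomputable def hMat (m n k : ℕ) : ℝ :=
  ∑ i ∈ Finset.Icc k n, (-1 : ℝ) ^ (i - k) * (Nat.choose m (i - k) : ℝ) / ((n + i + 1 : ℕ) : ℝ)

/-- The `H^(m)`-transform of a sequence: `(H^(m) x)_n = ∑_{k=1}^{n} h_{nk} x_k`. -/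
noncomputable def hTrans (m : ℕ) (x : ℕ → ℝ) (n : ℕ) : ℝ :=
  ∑ k ∈ Finset.range (n + 1), hMat m n k * x k

/-- `h_0(Δ^(m))`: sequences whose `H^(m)`-transform tends to `0`. -/
def hZero (m : ℕ) : Set (ℕ → ℝ) := {x | Tendsto (hTrans m x) atTop (𝓝 0)}

/-- `h_c(Δ^(m))`: sequences whose `H^(m)`-transform converges. -/
def hConv (m : ℕ) : Set (ℕ → ℝ) := {x | ∃ L : ℝ, Tendsto (hTrans m x) atTop (𝓝 L)}

/-- `h_∞(Δ^(m))`: sequences whose `H^(m)`-transform is bounded. -/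
def hBdd (m : ℕ) : Set (ℕ → ℝ) := {x | ∃ M : ℝ, ∀ n, |hTrans m x n| ≤ M}

/-- The space `c₀` of null real sequences. -/
def c0Seq : Set (ℕ → ℝ) := {y | Tendsto y atTop (𝓝 0)}

/-- The space `c` of convergent real sequences. -/
def cSeq : Set (ℕ → ℝ) := {y | ∃ L : ℝ, Tendsto y atTop (𝓝 L)}

/-- The space `ℓ∞` of bounded real sequences. -/
def linfSeq : Set (ℕ → ℝ) := {y | ∃ M : ℝ, ∀ n, |y n| ≤ M}

/-- The sup norm `‖y‖ = sup_n |y_n|` of a sequence. -/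
noncomputable def supNorm (y : ℕ → ℝ) : ℝ := ⨆ n, |y n|

/-- The norm `‖x‖ = sup_n |(H^(m) x)_n|` on the Hilbert difference sequence spaces. -/
noncomputable def hNorm (m : ℕ) (x : ℕ → ℝ) : ℝ := supNorm (hTrans m x)

lemma hMat_diag (m n : ℕ) : hMat m n n = 1 / ((n + n + 1 : ℕ) : ℝ) := by
  simp [hMat]

lemma hMat_diag_ne (m n : ℕ) : hMat m n n ≠ 0 := by
  rw [hMat_diag]
  positivity

lemma hTrans_linear (m : ℕ) (a b : ℝ) (x y : ℕ → ℝ) :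
    hTrans m (fun k => a * x k + b * y k) = fun n => a * hTrans m x n + b * hTrans m y n := by
  funext n
  simp only [hTrans, Finset.mul_sum, ← Finset.sum_add_distrib]
  exact Finset.sum_congr rfl fun k _ => by ring

/-- Recursive inverse of the `H^(m)`-transform. -/
noncomputable def invSeq (m : ℕ) (y : ℕ → ℝ) : ℕ → ℝ
  | n => (y n - ∑ k ∈ (Finset.range n).attach, hMat m n k * invSeq m y k) / hMat m n n
decreasing_by exact Finset.mem_range.mp k.2

lemma hTrans_invSeq (m : ℕ) (y : ℕ → ℝ) : hTrans m (invSeq m y) = y := by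
  funext n
  rw [hTrans, Finset.sum_range_succ]
  conv_lhs => rw [invSeq]
  rw [Finset.sum_attach (Finset.range n) (fun k => hMat m n k * invSeq m y k),
    mul_div_cancel₀ _ (hMat_diag_ne m n)]
  ring

lemma hTrans_inj (m : ℕ) (x y : ℕ → ℝ) (h : hTrans m x = hTrans m y) : x = y := by
  funext n
  induction n using Nat.strong_induction_on with
  | _ n ih =>
    have h1 := congrFun h n
    rw [hTrans, hTrans, Finset.sum_range_succ, Finset.sum_range_succ,
      Finset.sum_congr rfl (fun k hk => by rw [ih k (Finset.mem_range.mp hk)] :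
        ∀ k ∈ Finset.range n, hMat m n k * x k = hMat m n k * y k)] at h1
    exact mul_left_cancel₀ (hMat_diag_ne m n) (by linarith)

/-- The map `T x = H^(m) x` is a linear, norm-preserving bijection from `hBdd m` onto `linfSeq`. -/
theorem hilbert_diff_hinf_iso_linf (m : ℕ) (hm : 1 ≤ m) :
    (∀ (a b : ℝ) (x y : ℕ → ℝ),
      hTrans m (fun k => a * x k + b * y k) = fun n => a * hTrans m x n + b * hTrans m y n) ∧
    Set.BijOn (hTrans m) (hBdd m) linfSeq ∧
    (∀ x ∈ hBdd m, hNorm m x = supNorm (hTrans m x)) := by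
  refine ⟨hTrans_linear m, ⟨fun x hx => hx, fun x _ y _ h => hTrans_inj m x y h, ?_⟩,
    fun x _ => rfl⟩
  intro y hy
  exact ⟨invSeq m y, by simpa [hBdd, linfSeq, hTrans_invSeq] using hy, hTrans_invSeq m y⟩
end

section
/- Fix an integer m ≥ 1, an arbitrary set Y of real sequences, and an infinite matrix A = (a_{nk}). Suppose that for each n and k the series d_{nk} = Σ_{j=k}^{∞} a_{nj} B_{jk} converges, where B is the inverse triangle of H^(m), and let D = (d_{nk}). Then A ∈ (h_∞(Δ^(m)) : Y) if and only if the n-th row (a_{nk})_k of A belongs to the β-dual of h_∞(Δ^(m)) for every n and D ∈ (ℓ∞ : Y). -/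
open Filter Finset Topology

/-- `A ∈ (X : Y)`: for every `x ∈ X` each row-series `∑_k a_{nk} x_k` converges and the
sequence of the sums belongs to `Y`. -/
def matClass (A : ℕ → ℕ → ℝ) (X Y : Set (ℕ → ℝ)) : Prop :=
  ∀ x ∈ X, ∃ Ax : ℕ → ℝ,
    (∀ n, Tendsto (fun K => ∑ k ∈ Finset.range K, A n k * x k) atTop (𝓝 (Ax n))) ∧ Ax ∈ Y

/-- The β-dual of a set of real sequences. -/
def betaDual (X : Set (ℕ → ℝ)) : Set (ℕ → ℝ) :=
  {a | ∀ x ∈ X, ∃ L : ℝ, Tendsto (fun K => ∑ k ∈ Finset.range K, a k * x k) atTop (𝓝 L)}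

lemma abs_bound_of_tendsto {u : ℕ → ℝ} {L : ℝ} (h : Tendsto u atTop (𝓝 L)) :
    ∃ C : ℝ, ∀ n, |u n| ≤ C := by
  obtain ⟨C, hC⟩ := (h.abs).bddAbove_range
  exact ⟨C, fun n => hC ⟨n, rfl⟩⟩

lemma uniform_row_bound (S : ℕ → ℕ → ℝ)
    (hF : ∀ y : ℕ → ℝ, (∃ C : ℝ, ∀ k, |y k| ≤ C) →
      ∃ L : ℝ, Tendsto (fun J => ∑ k ∈ Finset.range (J+1), S J k * y k) atTop (𝓝 L)) :
    ∃ M : ℝ, ∀ J, ∑ k ∈ Finset.range (J+1), |S J k| ≤ M := by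
  -- continuous linear functionals on ℕ →ᵇ ℝ
  set X := BoundedContinuousFunction ℕ ℝ
  have hφbound : ∀ (J : ℕ) (f : X),
      ‖∑ k ∈ Finset.range (J+1), S J k * f k‖ ≤ (∑ k ∈ Finset.range (J+1), |S J k|) * ‖f‖ := by
    intro J f
    rw [Real.norm_eq_abs]
    calc |∑ k ∈ Finset.range (J+1), S J k * f k|
        ≤ ∑ k ∈ Finset.range (J+1), |S J k * f k| := Finset.abs_sum_le_sum_abs _ _
      _ ≤ ∑ k ∈ Finset.range (J+1), |S J k| * ‖f‖ := by
          refine Finset.sum_le_sum fun k _ => ?_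
          rw [abs_mul]
          exact mul_le_mul_of_nonneg_left (f.norm_coe_le_norm k) (abs_nonneg _)
      _ = (∑ k ∈ Finset.range (J+1), |S J k|) * ‖f‖ := (Finset.sum_mul _ _ _).symm
  let φ : ℕ → X →L[ℝ] ℝ := fun J =>
    LinearMap.mkContinuous
      { toFun := fun f => ∑ k ∈ Finset.range (J+1), S J k * f k
        map_add' := by
          intro f g
          rw [← Finset.sum_add_distrib]
          exact Finset.sum_congr rfl (fun k _ => by
            rw [BoundedContinuousFunction.add_apply]; ring)
        map_smul' := by
          intro c f
          simp only [BoundedContinuousFunction.coe_smul, smul_eq_mul, RingHom.id_apply,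
            Finset.mul_sum]
          exact Finset.sum_congr rfl (fun k _ => by
            rw [BoundedContinuousFunction.smul_apply, smul_eq_mul]; ring) }
      (∑ k ∈ Finset.range (J+1), |S J k|) (hφbound J)
  have hpt : ∀ f : X, ∃ C : ℝ, ∀ J, ‖φ J f‖ ≤ C := by
    intro f
    obtain ⟨L, hL⟩ := hF (fun k => f k) ⟨‖f‖, fun k => f.norm_coe_le_norm k⟩
    obtain ⟨C, hC⟩ := abs_bound_of_tendsto hL
    exact ⟨C, fun J => hC J⟩
  obtain ⟨C', hC'⟩ := banach_steinhaus hpt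
  refine ⟨C', fun J => ?_⟩
  -- sign vector
  set g : ℕ → ℝ := fun k => if 0 ≤ S J k then 1 else -1 with hg
  have hgb : ∀ k, ‖g k‖ ≤ 1 := by
    intro k; rw [hg]; dsimp; split <;> simp
  let f : X := BoundedContinuousFunction.ofNormedAddCommGroup g
    (continuous_of_discreteTopology) 1 hgb
  have hfnorm : ‖f‖ ≤ 1 :=
    BoundedContinuousFunction.norm_ofNormedAddCommGroup_le _ zero_le_one _
  have hval : φ J f = ∑ k ∈ Finset.range (J+1), |S J k| := by
    show (∑ k ∈ Finset.range (J+1), S J k * f k) = _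
    refine Finset.sum_congr rfl fun k _ => ?_
    have : f k = g k := rfl
    rw [this, hg]; dsimp
    split <;> rename_i h
    · rw [abs_of_nonneg h]; ring
    · rw [abs_of_neg (lt_of_not_ge h)]; ring
  calc ∑ k ∈ Finset.range (J+1), |S J k| = φ J f := hval.symm
    _ ≤ |φ J f| := le_abs_self _
    _ ≤ ‖φ J‖ * ‖f‖ := (φ J).le_opNorm f
    _ ≤ C' * 1 := by
        refine mul_le_mul (hC' J) hfnorm (norm_nonneg _) ?_
        exact le_trans (norm_nonneg _) (hC' J)
    _ = C' := mul_one _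

lemma schur_main (S : ℕ → ℕ → ℝ) (d : ℕ → ℝ)
    (hcol : ∀ k, Tendsto (fun J => S J k) atTop (𝓝 (d k)))
    (hF : ∀ y : ℕ → ℝ, (∃ C : ℝ, ∀ k, |y k| ≤ C) →
      ∃ L : ℝ, Tendsto (fun J => ∑ k ∈ Finset.range (J+1), S J k * y k) atTop (𝓝 L))
    (y : ℕ → ℝ) (hy : ∃ C : ℝ, ∀ k, |y k| ≤ C) :
    ∃ L : ℝ, Tendsto (fun K => ∑ k ∈ Finset.range K, d k * y k) atTop (𝓝 L) ∧
      Tendsto (fun J => ∑ k ∈ Finset.range (J+1), S J k * y k) atTop (𝓝 L) := by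
  obtain ⟨M, hM⟩ := uniform_row_bound S hF
  -- `d` is absolutely summable
  have hdsum : ∀ K, ∑ k ∈ Finset.range K, |d k| ≤ M := by
    intro K
    have h1 : Tendsto (fun J => ∑ k ∈ Finset.range K, |S J k|) atTop
        (𝓝 (∑ k ∈ Finset.range K, |d k|)) :=
      tendsto_finset_sum _ (fun k _ => (hcol k).abs)
    refine le_of_tendsto h1 ?_
    filter_upwards [eventually_ge_atTop K] with J hJ
    calc ∑ k ∈ Finset.range K, |S J k|
        ≤ ∑ k ∈ Finset.range (J+1), |S J k| := by
          refine Finset.sum_le_sum_of_subset_of_nonneg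
            (Finset.range_subset_range.2 (by omega)) (fun k _ _ => abs_nonneg _)
      _ ≤ M := hM J
  have hd1 : Summable (fun k => |d k|) :=
    summable_of_sum_range_le (fun _ => abs_nonneg _) hdsum
  -- for bounded z, `fun k => d k * z k` is summable
  have hsumz : ∀ (z : ℕ → ℝ) (C : ℝ), (∀ k, |z k| ≤ C) → Summable (fun k => d k * z k) := by
    intro z C hz
    refine Summable.of_abs (Summable.of_nonneg_of_le (fun k => abs_nonneg _)
      (fun k => ?_) (hd1.mul_right C))
    rw [abs_mul]
    exact mul_le_mul_of_nonneg_left (hz k) (abs_nonneg _)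
  obtain ⟨C0, hC0⟩ := hy
  set C : ℝ := max C0 1 with hCdef
  have hC : ∀ k, |y k| ≤ C := fun k => (hC0 k).trans (le_max_left _ _)
  have hC1 : (1:ℝ) ≤ C := le_max_right _ _
  have hCpos : (0:ℝ) < C := lt_of_lt_of_le one_pos hC1
  have hyS : Summable (fun k => d k * y k) := hsumz y C hC
  set L : ℝ := ∑' k, d k * y k with hLdef
  have hP : Tendsto (fun K => ∑ k ∈ Finset.range K, d k * y k) atTop (𝓝 L) :=
    hyS.hasSum.tendsto_sum_nat
  obtain ⟨c, hc⟩ := hF y ⟨C, hC⟩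
  refine ⟨L, hP, ?_⟩
  suffices hcL : c = L by rw [← hcL]; exact hc
  by_contra hne
  set δ : ℝ := c - L with hδdef
  have hδ : δ ≠ 0 := sub_ne_zero.2 hne
  have hδpos : 0 < |δ| := abs_pos.2 hδ
  set R : ℕ → ℕ → ℝ := fun J k => S J k - d k with hRdef
  set G : ℕ → ℝ := fun J => ∑ k ∈ Finset.range (J+1), R J k * y k with hGdef
  have hsplitG : ∀ (z : ℕ → ℝ) (J : ℕ),
      (∑ k ∈ Finset.range (J+1), R J k * z k)
        = (∑ k ∈ Finset.range (J+1), S J k * z k) - ∑ k ∈ Finset.range (J+1), d k * z k := by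
    intro z J
    rw [← Finset.sum_sub_distrib]
    exact Finset.sum_congr rfl (fun k _ => by rw [hRdef]; ring)
  have hGy : Tendsto G atTop (𝓝 δ) := by
    have h2 : Tendsto (fun J => ∑ k ∈ Finset.range (J+1), d k * y k) atTop (𝓝 L) :=
      hP.comp (tendsto_add_atTop_nat 1)
    have h3 : G = fun J => (∑ k ∈ Finset.range (J+1), S J k * y k)
        - ∑ k ∈ Finset.range (J+1), d k * y k := funext (fun J => hsplitG y J)
    rw [h3, hδdef]
    exact hc.sub h2
  -- columns of R go to zero (in blocks)
  have hRcol : ∀ K, Tendsto (fun J => ∑ k ∈ Finset.range K, |R J k|) atTop (𝓝 0) := by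
    intro K
    have h0 : ∀ k, Tendsto (fun J => |R J k|) atTop (𝓝 0) := by
      intro k
      have h5 := ((hcol k).sub
        (tendsto_const_nhds : Tendsto (fun _ : ℕ => d k) atTop (𝓝 (d k)))).abs
      simpa using h5
    have := tendsto_finset_sum (Finset.range K) (fun k _ => h0 k)
    simpa using this
  set ε : ℝ := |δ| / 8 with hεdef
  have hεpos : 0 < ε := by positivity
  set ε' : ℝ := ε / C with hε'def
  have hε'pos : 0 < ε' := by positivity
  -- the recursive step
  have hstep : ∀ p : ℕ, ∃ q, p < q ∧ (∑ k ∈ Finset.range (p+1), |R q k|) ≤ ε'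
      ∧ |G q - δ| ≤ ε := by
    intro p
    have h1 : ∀ᶠ q in atTop, (∑ k ∈ Finset.range (p+1), |R q k|) ≤ ε' :=
      (hRcol (p+1)).eventually (eventually_le_nhds hε'pos)
    have h2 : ∀ᶠ q in atTop, |G q - δ| ≤ ε := by
      have : Tendsto (fun q => |G q - δ|) atTop (𝓝 0) := by
        have h4 := hGy.sub (tendsto_const_nhds : Tendsto (fun _ : ℕ => δ) atTop (𝓝 δ))
        simpa using h4.abs
      exact this.eventually (eventually_le_nhds hεpos)
    have h3 : ∀ᶠ q in atTop, p < q := eventually_gt_atTop p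
    exact ((h1.and h2).and h3).exists.imp (fun q hq => ⟨hq.2, hq.1.1, hq.1.2⟩)
  choose step hstep1 hstep2 hstep3 using hstep
  set Jse : ℕ → ℕ := fun i => Nat.rec (step 0) (fun _ prev => step prev) i with hJdef
  have hJsucc : ∀ i, Jse (i+1) = step (Jse i) := fun i => rfl
  have hJmono : StrictMono Jse := by
    apply strictMono_nat_of_lt_succ
    intro i
    rw [hJsucc]
    exact hstep1 (Jse i)
  -- the alternating sign sequence
  set idx : ℕ → ℕ := fun k => ((Finset.range k).filter (fun i => Jse i < k)).card with hidxdef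
  set z : ℕ → ℝ := fun k => (-1 : ℝ)^(idx k) * y k with hzdef
  have hzb : ∀ k, |z k| ≤ C := by
    intro k
    rw [hzdef]
    simp only [abs_mul, abs_pow, abs_neg, abs_one, one_pow, one_mul]
    exact hC k
  have hidx_block : ∀ i k, Jse i < k → k ≤ Jse (i+1) → idx k = i + 1 := by
    intro i k h1 h2
    have heq : (Finset.range k).filter (fun i' => Jse i' < k) = Finset.range (i+1) := by
      ext i'
      simp only [Finset.mem_filter, Finset.mem_range]
      constructor
      · rintro ⟨_, hlt⟩
        by_contra hge
        push_neg at hge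
        have : Jse (i+1) ≤ Jse i' := hJmono.monotone hge
        omega
      · intro hi'
        have hle : Jse i' ≤ Jse i := hJmono.monotone (Nat.lt_succ_iff.mp hi')
        have : i ≤ Jse i := hJmono.le_apply
        exact ⟨by omega, by omega⟩
    rw [hidxdef]
    dsimp only
    rw [heq, Finset.card_range]
  -- key estimate
  set G' : ℕ → ℝ := fun J => ∑ k ∈ Finset.range (J+1), R J k * z k with hG'def
  have hhead : ∀ (w : ℕ → ℝ), (∀ k, |w k| ≤ C) → ∀ p,
      |∑ k ∈ Finset.range (p+1), R (step p) k * w k| ≤ ε := by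
    intro w hw p
    calc |∑ k ∈ Finset.range (p+1), R (step p) k * w k|
        ≤ ∑ k ∈ Finset.range (p+1), |R (step p) k * w k| := Finset.abs_sum_le_sum_abs _ _
      _ ≤ ∑ k ∈ Finset.range (p+1), |R (step p) k| * C := by
          refine Finset.sum_le_sum fun k _ => ?_
          rw [abs_mul]
          exact mul_le_mul_of_nonneg_left (hw k) (abs_nonneg _)
      _ = (∑ k ∈ Finset.range (p+1), |R (step p) k|) * C := (Finset.sum_mul _ _ _).symm
      _ ≤ ε' * C := mul_le_mul_of_nonneg_right (hstep2 p) (le_of_lt hCpos)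
      _ = ε := by rw [hε'def]; field_simp
  have hkey : ∀ i, |G' (Jse (i+1)) - (-1:ℝ)^(i+1) * δ| ≤ 3 * ε := by
    intro i
    set p := Jse i with hp
    set q := Jse (i+1) with hq
    have hq' : q = step p := hJsucc i
    have hpq : p < q := hJmono (Nat.lt_succ_self i)
    have hsplit : ∀ w : ℕ → ℝ, (∑ k ∈ Finset.range (q+1), R q k * w k)
        = (∑ k ∈ Finset.range (p+1), R q k * w k)
          + ∑ k ∈ Finset.Ico (p+1) (q+1), R q k * w k := by
      intro w
      rw [Finset.sum_range_add_sum_Ico _ (by omega : p+1 ≤ q+1)]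
    have hblockz : ∀ k ∈ Finset.Ico (p+1) (q+1), R q k * z k
        = (-1:ℝ)^(i+1) * (R q k * y k) := by
      intro k hk
      rw [Finset.mem_Ico] at hk
      have h1 : Jse i < k := by omega
      have h2 : k ≤ Jse (i+1) := by omega
      rw [hzdef]
      dsimp only
      rw [hidx_block i k h1 h2]
      ring
    have hGz : G' q = (∑ k ∈ Finset.range (p+1), R q k * z k)
        + (-1:ℝ)^(i+1) * (∑ k ∈ Finset.Ico (p+1) (q+1), R q k * y k) := by
      rw [hG'def]
      dsimp only
      rw [hsplit z, Finset.sum_congr rfl hblockz, ← Finset.mul_sum]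
    have hGy' : G q = (∑ k ∈ Finset.range (p+1), R q k * y k)
        + ∑ k ∈ Finset.Ico (p+1) (q+1), R q k * y k := by
      rw [hGdef]
      dsimp only
      rw [hsplit y]
    have hz1 : |∑ k ∈ Finset.range (p+1), R q k * z k| ≤ ε := by
      rw [hq']; exact hhead z hzb p
    have hy1 : |∑ k ∈ Finset.range (p+1), R q k * y k| ≤ ε := by
      rw [hq']; exact hhead y hC p
    have hy2 : |G q - δ| ≤ ε := by rw [hq']; exact hstep3 p
    have hmid : |(∑ k ∈ Finset.Ico (p+1) (q+1), R q k * y k) - δ| ≤ 2 * ε := by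
      have : (∑ k ∈ Finset.Ico (p+1) (q+1), R q k * y k) - δ
          = (G q - δ) - ∑ k ∈ Finset.range (p+1), R q k * y k := by
        rw [hGy']; ring
      rw [this]
      calc |(G q - δ) - ∑ k ∈ Finset.range (p+1), R q k * y k|
          ≤ |G q - δ| + |∑ k ∈ Finset.range (p+1), R q k * y k| := abs_sub _ _
        _ ≤ ε + ε := add_le_add hy2 hy1
        _ = 2 * ε := by ring
    have heq : G' q - (-1:ℝ)^(i+1) * δ
        = (∑ k ∈ Finset.range (p+1), R q k * z k)
          + (-1:ℝ)^(i+1) * ((∑ k ∈ Finset.Ico (p+1) (q+1), R q k * y k) - δ) := by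
      rw [hGz]; ring
    rw [heq]
    calc |(∑ k ∈ Finset.range (p+1), R q k * z k)
          + (-1:ℝ)^(i+1) * ((∑ k ∈ Finset.Ico (p+1) (q+1), R q k * y k) - δ)|
        ≤ |∑ k ∈ Finset.range (p+1), R q k * z k|
          + |(-1:ℝ)^(i+1) * ((∑ k ∈ Finset.Ico (p+1) (q+1), R q k * y k) - δ)| := abs_add_le _ _
      _ ≤ ε + 2 * ε := by
          refine add_le_add hz1 ?_
          rw [abs_mul, abs_pow, abs_neg, abs_one, one_pow, one_mul]
          exact hmid
      _ = 3 * ε := by ring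
  -- G' converges, contradiction
  obtain ⟨cz, hcz⟩ := hF z ⟨C, hzb⟩
  have hzS : Summable (fun k => d k * z k) := hsumz z C hzb
  have hG'conv : Tendsto G' atTop (𝓝 (cz - ∑' k, d k * z k)) := by
    have h2 : Tendsto (fun J => ∑ k ∈ Finset.range (J+1), d k * z k) atTop
        (𝓝 (∑' k, d k * z k)) := hzS.hasSum.tendsto_sum_nat.comp (tendsto_add_atTop_nat 1)
    have h3 : G' = fun J => (∑ k ∈ Finset.range (J+1), S J k * z k)
        - ∑ k ∈ Finset.range (J+1), d k * z k := funext (fun J => hsplitG z J)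
    rw [h3]
    exact hcz.sub h2
  set u : ℕ → ℝ := fun i => G' (Jse (i+1)) with hudef
  have hmono2 : StrictMono (fun i => Jse (i+1)) := fun a b h => hJmono (Nat.succ_lt_succ h)
  have hu : Tendsto u atTop (𝓝 (cz - ∑' k, d k * z k)) :=
    hG'conv.comp hmono2.tendsto_atTop
  have hdiff : Tendsto (fun i => u (i+1) - u i) atTop (𝓝 0) := by
    have := (hu.comp (tendsto_add_atTop_nat 1)).sub hu
    simpa using this
  have hlb : ∀ i, |δ| ≤ |u (i+1) - u i| := by
    intro i
    have h1 := hkey i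
    have h2 := hkey (i+1)
    have hsign : (-1:ℝ)^(i+2) * δ - (-1:ℝ)^(i+1) * δ = (-1:ℝ)^i * (2 * δ) := by
      ring
    have habs : |(-1:ℝ)^(i+2) * δ - (-1:ℝ)^(i+1) * δ| = 2 * |δ| := by
      rw [hsign, abs_mul, abs_pow, abs_neg, abs_one, one_pow, one_mul, abs_mul]
      simp [abs_two]
    have h3 : 2 * |δ| ≤ |u (i+1) - (-1:ℝ)^(i+2) * δ| + |u (i+1) - u i|
        + |u i - (-1:ℝ)^(i+1) * δ| := by
      have : (-1:ℝ)^(i+2) * δ - (-1:ℝ)^(i+1) * δ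
          = -(u (i+1) - (-1:ℝ)^(i+2) * δ) + (u (i+1) - u i) + (u i - (-1:ℝ)^(i+1) * δ) := by
        ring
      calc 2 * |δ| = |(-1:ℝ)^(i+2) * δ - (-1:ℝ)^(i+1) * δ| := habs.symm
        _ = |-(u (i+1) - (-1:ℝ)^(i+2) * δ) + (u (i+1) - u i) + (u i - (-1:ℝ)^(i+1) * δ)| := by
            rw [this]
        _ ≤ |-(u (i+1) - (-1:ℝ)^(i+2) * δ) + (u (i+1) - u i)| + |u i - (-1:ℝ)^(i+1) * δ| :=
            abs_add_le _ _
        _ ≤ |-(u (i+1) - (-1:ℝ)^(i+2) * δ)| + |u (i+1) - u i| + |u i - (-1:ℝ)^(i+1) * δ| := by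
            exact add_le_add (abs_add_le _ _) le_rfl
        _ = |u (i+1) - (-1:ℝ)^(i+2) * δ| + |u (i+1) - u i| + |u i - (-1:ℝ)^(i+1) * δ| := by
            rw [abs_neg]
    have h1' : |u (i+1) - (-1:ℝ)^(i+2) * δ| ≤ 3 * ε := h2
    have h2' : |u i - (-1:ℝ)^(i+1) * δ| ≤ 3 * ε := h1
    have hε8 : ε = |δ| / 8 := hεdef
    linarith
  have : ∀ᶠ i in atTop, |u (i+1) - u i| < |δ| := by
    have := hdiff.abs
    simp only [abs_zero] at this
    exact this.eventually (eventually_lt_nhds hδpos)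
  obtain ⟨i, hi⟩ := this.exists
  exact absurd (hlb i) (not_le.2 hi)

lemma sum_tri (n : ℕ) (f : ℕ → ℕ → ℝ) :
    ∑ k ∈ Finset.range (n+1), ∑ j ∈ Finset.range (k+1), f k j
      = ∑ j ∈ Finset.range (n+1), ∑ k ∈ Finset.Icc j n, f k j := by
  induction n with
  | zero => simp
  | succ n ih =>
    rw [Finset.sum_range_succ, ih,
      Finset.sum_range_succ (fun j => ∑ k ∈ Finset.Icc j (n+1), f k j),
      Finset.sum_range_succ (fun j => f (n+1) j)]
    have h1 : ∀ j ∈ Finset.range (n+1), ∑ k ∈ Finset.Icc j (n+1), f k j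
        = (∑ k ∈ Finset.Icc j n, f k j) + f (n+1) j := by
      intro j hj
      have := Finset.mem_range.mp hj
      exact Finset.sum_Icc_succ_top (by omega) _
    rw [Finset.sum_congr rfl h1, Finset.sum_add_distrib]
    simp [Finset.Icc_self]
    ring

/-- `A ∈ (hBdd m : Y)` iff every row of `A` lies in the β-dual of `hBdd m` and the
matrix `D`, `d_{nk} = ∑_{j=k}^∞ a_{nj} B_{jk}`, satisfies `D ∈ (linfSeq : Y)`. -/
theorem hilbert_diff_matrix_from_hinf (m : ℕ) (hm : 1 ≤ m) (Y : Set (ℕ → ℝ))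
    (A : ℕ → ℕ → ℝ)
    (B : ℕ → ℕ → ℝ)
    (hBtri : ∀ n k : ℕ, n < k → B n k = 0)
    (hBright : ∀ n k : ℕ, (∑ j ∈ Finset.Icc k n, hMat m n j * B j k) = if n = k then 1 else 0)
    (hBleft : ∀ n k : ℕ, (∑ j ∈ Finset.Icc k n, B n j * hMat m j k) = if n = k then 1 else 0)
    (D : ℕ → ℕ → ℝ)
    (hD : ∀ n k : ℕ,
      Tendsto (fun J => ∑ j ∈ Finset.Icc k J, A n j * B j k) atTop (𝓝 (D n k))) :
    matClass A (hBdd m) Y ↔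
      ((∀ n : ℕ, (fun k => A n k) ∈ betaDual (hBdd m)) ∧ matClass D linfSeq Y) := by
  classical
  set S : ℕ → ℕ → ℕ → ℝ := fun n J k => ∑ j ∈ Finset.Icc k J, A n j * B j k with hSdef
  set Bapp : (ℕ → ℝ) → ℕ → ℝ := fun y n => ∑ k ∈ Finset.range (n+1), B n k * y k with hBappdef
  have hHB : ∀ (y : ℕ → ℝ) (n : ℕ), hTrans m (Bapp y) n = y n := by
    intro y n
    show (∑ k ∈ Finset.range (n+1), hMat m n k * Bapp y k) = y n
    calc ∑ k ∈ Finset.range (n+1), hMat m n k * Bapp y k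
        = ∑ k ∈ Finset.range (n+1), ∑ j ∈ Finset.range (k+1),
            hMat m n k * (B k j * y j) := by
          refine Finset.sum_congr rfl fun k _ => ?_
          rw [hBappdef]
          dsimp only
          rw [Finset.mul_sum]
      _ = ∑ j ∈ Finset.range (n+1), ∑ k ∈ Finset.Icc j n,
            hMat m n k * (B k j * y j) := sum_tri n _
      _ = ∑ j ∈ Finset.range (n+1), (∑ k ∈ Finset.Icc j n, hMat m n k * B k j) * y j := by
          refine Finset.sum_congr rfl fun j _ => ?_
          rw [Finset.sum_mul]
          exact Finset.sum_congr rfl fun k _ => by ring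
      _ = ∑ j ∈ Finset.range (n+1), (if n = j then (1:ℝ) else 0) * y j := by
          refine Finset.sum_congr rfl fun j _ => ?_
          rw [hBright n j]
      _ = y n := by simp
  have hBH : ∀ (x : ℕ → ℝ) (n : ℕ), Bapp (hTrans m x) n = x n := by
    intro x n
    show (∑ k ∈ Finset.range (n+1), B n k * hTrans m x k) = x n
    calc ∑ k ∈ Finset.range (n+1), B n k * hTrans m x k
        = ∑ k ∈ Finset.range (n+1), ∑ j ∈ Finset.range (k+1),
            B n k * (hMat m k j * x j) := by
          refine Finset.sum_congr rfl fun k _ => ?_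
          rw [hTrans, Finset.mul_sum]
      _ = ∑ j ∈ Finset.range (n+1), ∑ k ∈ Finset.Icc j n,
            B n k * (hMat m k j * x j) := sum_tri n _
      _ = ∑ j ∈ Finset.range (n+1), (∑ k ∈ Finset.Icc j n, B n k * hMat m k j) * x j := by
          refine Finset.sum_congr rfl fun j _ => ?_
          rw [Finset.sum_mul]
          exact Finset.sum_congr rfl fun k _ => by ring
      _ = ∑ j ∈ Finset.range (n+1), (if n = j then (1:ℝ) else 0) * x j := by
          refine Finset.sum_congr rfl fun j _ => ?_
          rw [hBleft n j]
      _ = x n := by simp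
  have hBapp_mem : ∀ y : ℕ → ℝ, (∃ C : ℝ, ∀ k, |y k| ≤ C) → Bapp y ∈ hBdd m := by
    rintro y ⟨M, hM⟩
    exact ⟨M, fun n => by rw [hHB y n]; exact hM n⟩
  have hpartial : ∀ (n : ℕ) (y : ℕ → ℝ) (J : ℕ),
      (∑ j ∈ Finset.range (J+1), A n j * Bapp y j)
        = ∑ k ∈ Finset.range (J+1), S n J k * y k := by
    intro n y J
    calc ∑ j ∈ Finset.range (J+1), A n j * Bapp y j
        = ∑ j ∈ Finset.range (J+1), ∑ k ∈ Finset.range (j+1),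
            A n j * (B j k * y k) := by
          refine Finset.sum_congr rfl fun j _ => ?_
          rw [hBappdef]
          dsimp only
          rw [Finset.mul_sum]
      _ = ∑ k ∈ Finset.range (J+1), ∑ j ∈ Finset.Icc k J,
            A n j * (B j k * y k) := sum_tri J _
      _ = ∑ k ∈ Finset.range (J+1), S n J k * y k := by
          refine Finset.sum_congr rfl fun k _ => ?_
          rw [hSdef]
          dsimp only
          rw [Finset.sum_mul]
          exact Finset.sum_congr rfl fun j _ => by ring
  have key : (∀ x ∈ hBdd m, ∀ n : ℕ,
        ∃ L : ℝ, Tendsto (fun K => ∑ k ∈ Finset.range K, A n k * x k) atTop (𝓝 L)) →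
      ∀ (n : ℕ) (y : ℕ → ℝ), (∃ C : ℝ, ∀ k, |y k| ≤ C) →
        ∃ L : ℝ, Tendsto (fun K => ∑ k ∈ Finset.range K, D n k * y k) atTop (𝓝 L) ∧
          Tendsto (fun K => ∑ k ∈ Finset.range K, A n k * Bapp y k) atTop (𝓝 L) := by
    intro hrow n y hy
    have hF : ∀ z : ℕ → ℝ, (∃ C : ℝ, ∀ k, |z k| ≤ C) →
        ∃ L : ℝ, Tendsto (fun J => ∑ k ∈ Finset.range (J+1), S n J k * z k) atTop (𝓝 L) := by
      intro z hz
      obtain ⟨L, hL⟩ := hrow (Bapp z) (hBapp_mem z hz) n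
      refine ⟨L, ?_⟩
      have h2 : Tendsto (fun J : ℕ => ∑ k ∈ Finset.range (J+1), A n k * Bapp z k)
          atTop (𝓝 L) := hL.comp (tendsto_add_atTop_nat 1)
      have h3 : (fun J : ℕ => ∑ k ∈ Finset.range (J+1), S n J k * z k)
          = fun J : ℕ => ∑ j ∈ Finset.range (J+1), A n j * Bapp z j :=
        funext fun J => (hpartial n z J).symm
      rw [h3]
      exact h2
    obtain ⟨L, h1, h2⟩ := schur_main (S n) (D n) (hD n) hF y hy
    refine ⟨L, h1, ?_⟩
    have h3 : Tendsto (fun J : ℕ => ∑ j ∈ Finset.range (J+1), A n j * Bapp y j)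
        atTop (𝓝 L) := by
      have h4 : (fun J : ℕ => ∑ j ∈ Finset.range (J+1), A n j * Bapp y j)
          = fun J : ℕ => ∑ k ∈ Finset.range (J+1), S n J k * y k :=
        funext fun J => hpartial n y J
      rw [h4]
      exact h2
    exact (tendsto_add_atTop_iff_nat 1).1 h3
  constructor
  · intro hA
    have hrow : ∀ x ∈ hBdd m, ∀ n : ℕ,
        ∃ L : ℝ, Tendsto (fun K => ∑ k ∈ Finset.range K, A n k * x k) atTop (𝓝 L) := by
      intro x hx n
      obtain ⟨Ax, h1, _⟩ := hA x hx
      exact ⟨Ax n, h1 n⟩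
    constructor
    · intro n x hx
      obtain ⟨Ax, h1, _⟩ := hA x hx
      exact ⟨Ax n, h1 n⟩
    · intro y hy
      obtain ⟨Ax, hAx1, hAx2⟩ := hA (Bapp y) (hBapp_mem y hy)
      refine ⟨Ax, fun n => ?_, hAx2⟩
      obtain ⟨L, hL1, hL2⟩ := key hrow n y hy
      have hLe : L = Ax n := tendsto_nhds_unique hL2 (hAx1 n)
      rwa [hLe] at hL1
  · rintro ⟨hβ, hDY⟩ x hx
    have hrow : ∀ x' ∈ hBdd m, ∀ n : ℕ,
        ∃ L : ℝ, Tendsto (fun K => ∑ k ∈ Finset.range K, A n k * x' k) atTop (𝓝 L) :=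
      fun x' hx' n => hβ n x' hx'
    obtain ⟨Dy, hDy1, hDy2⟩ := hDY (hTrans m x) hx
    refine ⟨Dy, fun n => ?_, hDy2⟩
    obtain ⟨L, hL1, hL2⟩ := key hrow n (hTrans m x) hx
    have hxy : Bapp (hTrans m x) = x := funext (hBH x)
    rw [hxy] at hL2
    have hLe : L = Dy n := tendsto_nhds_unique hL1 (hDy1 n)
    rwa [hLe] at hL2
end
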